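/- arXiv:1209.2760 — 2 statements merged into one kernel-verified Lean document; each statement's English description precedes it below -/
import Mathlib

section
/- For every natural number n, C_{2n+1}(x) − 2 = (x − 2)·(C_n(x) + C_{n−1}(x) + ⋯ + C_1(x) + 1)², i.e., C_{2n+1}(x) − 2 = (x−2)·U_{2n+1}(x)² where U_{2n+1}(x) = S_{n+1}(x) + S_n(x). -/
open Polynomial

/-- Normalized Chebyshev polynomial of the first kind: `C 0 = 2`, `C 1 = X`,
`C (n+2) = X * C (n+1) - C n`. -/
noncomputable def chebC : ℕ → Polynomial ℤ
  | 0 => 2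
  | 1 => X
  | n + 2 => X * chebC (n + 1) - chebC n

/-- Normalized Chebyshev polynomial of the second kind: `S 0 = 0`, `S 1 = 1`,
`S (n+2) = X * S (n+1) - S n`. -/
noncomputable def chebS : ℕ → Polynomial ℤ
  | 0 => 0
  | 1 => 1
  | n + 2 => X * chebS (n + 1) - chebS n

lemma chebC_add_two (n : ℕ) : chebC (n + 2) = X * chebC (n + 1) - chebC n := rfl

lemma chebS_add_two (n : ℕ) : chebS (n + 2) = X * chebS (n + 1) - chebS n := rfl

lemma chebS_sq (n : ℕ) :
    chebS (n + 1) ^ 2 + chebS n ^ 2 - X * chebS (n + 1) * chebS n = 1 := by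
  induction n with
  | zero => simp [chebS]
  | succ k ih =>
    rw [chebS_add_two]
    linear_combination ih

lemma cheb_key (n : ℕ) :
    (chebC (2 * n + 1) - 2 = (X - 2) * (chebS (n + 1) + chebS n) ^ 2) ∧
    (chebC (2 * n + 2) - 2 = (X ^ 2 - 4) * chebS (n + 1) ^ 2) := by
  induction n with
  | zero =>
    constructor
    · show (X : Polynomial ℤ) - 2 = (X - 2) * (1 + 0) ^ 2
      ring
    · show X * (X : Polynomial ℤ) - 2 - 2 = (X ^ 2 - 4) * 1 ^ 2
      ring
  | succ k ih =>
    obtain ⟨h1, h2⟩ := ih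
    have hA : chebC (2 * (k + 1) + 1) - 2
        = (X - 2) * (chebS (k + 1 + 1) + chebS (k + 1)) ^ 2 := by
      rw [show 2 * (k + 1) + 1 = 2 * k + 1 + 2 from by ring, chebC_add_two,
        show 2 * k + 1 + 1 = 2 * k + 2 from rfl,
        show k + 1 + 1 = k + 2 from rfl, chebS_add_two]
      linear_combination X * h2 - h1 - 2 * ((X : Polynomial ℤ) - 2) * chebS_sq k
    refine ⟨hA, ?_⟩
    rw [show 2 * (k + 1) + 2 = 2 * k + 2 + 2 from by ring, chebC_add_two,
      show 2 * k + 2 + 1 = 2 * (k + 1) + 1 from by ring,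
      show k + 1 + 1 = k + 2 from rfl, chebS_add_two]
    rw [show k + 1 + 1 = k + 2 from rfl, chebS_add_two] at hA
    linear_combination X * hA - h2 - 2 * ((X : Polynomial ℤ) - 2) * chebS_sq k

/-- `C_{2n+1} − 2 = (x−2)·(S_{n+1} + S_n)²`. -/
theorem chebC_odd_sub_two (n : ℕ) :
    chebC (2 * n + 1) - 2 = (X - 2) * (chebS (n + 1) + chebS n) ^ 2 := by
  exact (cheb_key n).1
end

section
/- If n = 2^m is a power of two with m ≥ 1, then the polynomial C_n(x) ∈ ℤ[x] is irreducible over ℚ. -/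
open Polynomial

theorem chebC_eq_dickson : ∀ n, chebC n = dickson 1 1 n
  | 0 => by
      rw [chebC, dickson_zero]; norm_num
  | 1 => by rw [chebC, dickson_one]
  | n + 2 => by
      rw [chebC, dickson_add_two, chebC_eq_dickson n, chebC_eq_dickson (n + 1), C_1, one_mul]

theorem chebC_monic_natDegree : ∀ n, (chebC (n + 1)).Monic ∧ (chebC (n + 1)).natDegree = n + 1
  | 0 => ⟨monic_X, natDegree_X⟩
  | 1 => by
      have h : chebC 2 = X ^ 2 - C 2 := by
        show X * chebC 1 - chebC 0 = _
        simp only [chebC, map_ofNat]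
        ring
      rw [h]
      exact ⟨monic_X_pow_sub_C 2 (by norm_num), natDegree_X_pow_sub_C⟩
  | n + 2 => by
      obtain ⟨hm1, hd1⟩ := chebC_monic_natDegree (n + 1)
      obtain ⟨hm0, hd0⟩ := chebC_monic_natDegree n
      have hmul : (X * chebC (n + 2)).Monic := monic_X.mul hm1
      have hdmul : (X * chebC (n + 2)).natDegree = n + 3 := by
        rw [natDegree_mul X_ne_zero hm1.ne_zero, natDegree_X, hd1]; omega
      have hdeg : (chebC (n + 1)).degree < (X * chebC (n + 2)).degree := by
        rw [degree_eq_natDegree hm0.ne_zero, degree_eq_natDegree hmul.ne_zero, hd0, hdmul]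
        exact_mod_cast by omega
      constructor
      · rw [chebC]
        exact hmul.sub_of_left hdeg
      · rw [chebC, ← hdmul]
        exact natDegree_sub_eq_left_of_natDegree_lt (by
          rw [hdmul, hd0]; omega)

theorem chebC_two_mul (k : ℕ) : chebC (2 * k) = chebC k ^ 2 - 2 := by
  rw [chebC_eq_dickson, chebC_eq_dickson, dickson_one_one_mul, dickson_two]
  simp [sub_comp, pow_comp, X_comp, mul_comp]
  ring

theorem chebC_eval_zero (m : ℕ) (hm : 1 ≤ m) :
    (chebC (2 ^ m)).eval 0 = 2 ∨ (chebC (2 ^ m)).eval 0 = -2 := by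
  induction m with
  | zero => omega
  | succ k ih =>
    rcases Nat.eq_or_lt_of_le hm with h | h
    · right
      have : (2 : ℕ) ^ 1 = 2 * 1 := by norm_num
      rw [← h, pow_one, show (2 : ℕ) = 2 * 1 by norm_num, chebC_two_mul]
      simp [chebC]
    · have hk : 1 ≤ k := by omega
      have h2 : (2 : ℕ) ^ (k + 1) = 2 * 2 ^ k := by ring
      rw [h2, chebC_two_mul]
      rcases ih hk with h | h <;> (left; simp [h])

theorem chebC_map_zmod_two (m : ℕ) :
    (chebC (2 ^ m)).map (Int.castRingHom (ZMod 2)) = X ^ (2 ^ m) := by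
  haveI : Fact (Nat.Prime 2) := ⟨by norm_num⟩
  rw [chebC_eq_dickson, map_dickson, map_one]
  induction m with
  | zero => simp [dickson_one]
  | succ k ih =>
    have h2 : (2 : ℕ) ^ (k + 1) = 2 * 2 ^ k := by ring
    rw [h2, dickson_one_one_mul, ih, dickson_one_one_charP (R := ZMod 2) 2, pow_comp, X_comp, ← pow_mul, Nat.mul_comm]

/-- `C_{2^m}` is irreducible over `ℚ` for `m ≥ 1`. -/
theorem chebC_pow_two_irreducible (m : ℕ) (hm : 1 ≤ m) :
    Irreducible ((chebC (2 ^ m)).map (Int.castRingHom ℚ)) := by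
  set N := 2 ^ m with hN
  have hN1 : 1 ≤ N := Nat.one_le_two_pow
  obtain ⟨hmon, hdeg⟩ := by
    have := chebC_monic_natDegree (N - 1)
    rwa [Nat.sub_add_cancel hN1] at this
  have hmap := chebC_map_zmod_two m
  have heis : (chebC N).IsEisensteinAt (Ideal.span {(2 : ℤ)}) := by
    constructor
    · rw [hmon.leadingCoeff, Ideal.mem_span_singleton]
      norm_num
    · intro n hn
      rw [hdeg] at hn
      rw [Ideal.mem_span_singleton]
      have : ((chebC N).map (Int.castRingHom (ZMod 2))).coeff n = 0 := by
        rw [hmap, coeff_X_pow, if_neg (by omega)]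
      rw [coeff_map] at this
      exact_mod_cast (ZMod.intCast_zmod_eq_zero_iff_dvd _ 2).mp this
    · rw [Ideal.span_singleton_pow, Ideal.mem_span_singleton,
        coeff_zero_eq_eval_zero]
      rcases chebC_eval_zero m hm with h | h <;> rw [h] <;> norm_num
  have hprime : (Ideal.span {(2 : ℤ)}).IsPrime :=
    (Ideal.span_singleton_prime (by norm_num)).mpr Int.prime_two
  have hirr : Irreducible (chebC N) :=
    heis.irreducible hprime hmon.isPrimitive (by rw [hdeg]; omega)
  have := (hmon.irreducible_iff_irreducible_map_fraction_map (K := ℚ)).mp hirr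
  rwa [algebraMap_int_eq] at this
end
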